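/- Let Δ ⊂ ℝⁿ be a compact convex set with nonempty interior containing the origin in its interior, let u₀ : ℝⁿ → ℝ be a smooth convex function with bounded gradient, ∇u₀(ℝⁿ) = int Δ and ∫_{ℝⁿ} e^{-u₀} dx = vol(Δ). Let t ∈ (0,1) and let u : ℝⁿ → ℝ be a smooth function with everywhere positive-definite Hessian, ∇u(ℝⁿ) = int Δ and det(D²u) = e^{-w} where w := (1-t)u₀ + t·u, and suppose w(x) ≥ κ‖x‖ - C for some κ > 0, C ∈ ℝ. Then the point -(t/(1-t))·P_c belongs to Δ, where P_c = (∫_Δ y dy)/vol(Δ) is the barycenter of Δ. -/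

import Mathlib

open MeasureTheory Set
open scoped RealInnerProductSpace
open scoped ENNReal NNReal

section Aux
open InnerProductSpace

variable {E : Type*} [NormedAddCommGroup E] [InnerProductSpace ℝ E] [CompleteSpace E]

lemma aux_grad_contDiff {f : E → ℝ} (hf : ContDiff ℝ (⊤:ℕ∞) f) :
    ContDiff ℝ (⊤:ℕ∞) (gradient f) :=
  (toDual ℝ E).symm.contDiff.comp (hf.fderiv_right (by exact_mod_cast le_top))

lemma aux_inner_gradient {f : E → ℝ} (x v : E) : ⟪gradient f x, v⟫ = fderiv ℝ f x v := by
  simp [gradient, toDual_symm_apply]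

lemma aux_grad_inj {u : E → ℝ} (hu : ContDiff ℝ (⊤:ℕ∞) u)
    (hupos : ∀ x h, h ≠ 0 → 0 < ⟪(fderiv ℝ (gradient u) x) h, h⟫) :
    Function.Injective (gradient u) := by
  intro x y hxy
  by_contra hne
  have hdiff : Differentiable ℝ (gradient u) :=
    (aux_grad_contDiff hu).differentiable (by simp)
  set v := x - y with hv
  have hv0 : v ≠ 0 := sub_ne_zero.2 hne
  set φ : ℝ → ℝ := fun s => ⟪gradient u (y + s • v), v⟫ with hφ
  have hder : ∀ s : ℝ, HasDerivAt φ ⟪(fderiv ℝ (gradient u) (y + s • v)) v, v⟫ s := by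
    intro s
    have h1 : HasDerivAt (fun s : ℝ => y + s • v) v s := by
      simpa using ((hasDerivAt_id s).smul_const v).const_add y
    have h2 := ((hdiff (y + s • v)).hasFDerivAt.comp_hasDerivAt s h1)
    refine (h2.inner ℝ (hasDerivAt_const s v)).congr_deriv ?_
    simp
  have hmono : StrictMono φ := by
    apply strictMono_of_deriv_pos
    intro s
    rw [(hder s).deriv]
    exact hupos _ _ hv0
  have h01 : φ 0 < φ 1 := hmono zero_lt_one
  have : φ 0 = φ 1 := by
    simp only [hφ, zero_smul, add_zero, one_smul, hv]
    rw [show y + (x - y) = x by abel, hxy]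
  linarith

lemma aux_integrable_exp {n : ℕ} (κ C : ℝ) (hκ : 0 < κ) :
    Integrable (fun x : EuclideanSpace ℝ (Fin n) => Real.exp (C - κ * ‖x‖)) := by
  set m : ℕ := n + 1
  set K : ℝ := Real.exp (C + κ) * m.factorial / κ ^ m with hK
  have hint : Integrable (fun x : EuclideanSpace ℝ (Fin n) =>
      K * (1 + ‖x‖) ^ (-(m : ℝ))) := by
    refine (integrable_one_add_norm ?_).const_mul K
    rw [finrank_euclideanSpace_fin]
    exact_mod_cast Nat.lt_succ_self n
  refine hint.mono' ?_ ?_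
  · exact (Real.continuous_exp.comp (by continuity)).aestronglyMeasurable
  · refine Filter.Eventually.of_forall (fun x => ?_)
    set a : ℝ := 1 + ‖x‖ with ha
    have ha1 : (1:ℝ) ≤ a := by simp [ha, norm_nonneg]
    have ha0 : (0:ℝ) < a := lt_of_lt_of_le one_pos ha1
    have hκa : (0:ℝ) < κ * a := mul_pos hκ ha0
    have h1 : (κ * a) ^ m / m.factorial ≤ Real.exp (κ * a) :=
      Real.pow_div_factorial_le_exp _ hκa.le m
    have hpow : (0:ℝ) < (κ * a) ^ m := pow_pos hκa m
    have h2 : Real.exp (-(κ * a)) ≤ m.factorial / (κ * a) ^ m := by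
      rw [Real.exp_neg, inv_le_comm₀ (Real.exp_pos _) (by positivity), inv_div]
      exact h1
    have h3 : Real.exp (C - κ * ‖x‖) = Real.exp (C + κ) * Real.exp (-(κ * a)) := by
      rw [← Real.exp_add, ha]; ring_nf
    have h4 : K * (1 + ‖x‖) ^ (-(m : ℝ)) = K * ((a : ℝ) ^ m)⁻¹ := by
      rw [← ha, Real.rpow_neg ha0.le, Real.rpow_natCast]
    rw [Real.norm_eq_abs, abs_of_pos (Real.exp_pos _), h3, h4, hK]
    calc Real.exp (C + κ) * Real.exp (-(κ * a))
        ≤ Real.exp (C + κ) * (↑m.factorial / ((κ*a)^m)) := by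
          gcongr
      _ = Real.exp (C + κ) * ↑m.factorial / κ ^ m * (a ^ m)⁻¹ := by
          rw [mul_pow]
          field_simp

end Aux

/-- Let `Δ ⊂ ℝⁿ` be a compact convex set with the origin in its interior,
`u₀` smooth convex with bounded gradient, `∇u₀(ℝⁿ) = int Δ` and `∫ e^{-u₀} = vol Δ`.
Let `t ∈ (0,1)` and let `u` be smooth with positive-definite Hessian,
`∇u(ℝⁿ) = int Δ`, `det D²u = e^{-w}` where `w = (1-t)u₀ + t·u`, with
`w x ≥ κ‖x‖ - C` for some `κ > 0`.  Then `-(t/(1-t)) • P_c ∈ Δ`, where `P_c` is the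
barycenter of `Δ`. -/
theorem scaled_barycenter_mem_polytope {n : ℕ}
    (Δ : Set (EuclideanSpace ℝ (Fin n))) (hΔcpt : IsCompact Δ) (hΔconv : Convex ℝ Δ)
    (hΔ0 : (0 : EuclideanSpace ℝ (Fin n)) ∈ interior Δ)
    (u₀ : EuclideanSpace ℝ (Fin n) → ℝ) (hu₀smooth : ContDiff ℝ (⊤ : ℕ∞) u₀)
    (hu₀conv : ConvexOn ℝ Set.univ u₀)
    (L : ℝ) (hu₀bdd : ∀ x, ‖gradient u₀ x‖ ≤ L)
    (hu₀grad : Set.range (gradient u₀) = interior Δ)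
    (hu₀norm : (∫ x, Real.exp (-(u₀ x))) = (volume Δ).toReal)
    (t : ℝ) (ht : t ∈ Set.Ioo (0 : ℝ) 1)
    (u w : EuclideanSpace ℝ (Fin n) → ℝ) (husmooth : ContDiff ℝ (⊤ : ℕ∞) u)
    (hupos : ∀ x h, h ≠ 0 → 0 < ⟪(fderiv ℝ (gradient u) x) h, h⟫)
    (hugrad : Set.range (gradient u) = interior Δ)
    (hwdef : ∀ x, w x = (1 - t) * u₀ x + t * u x)
    (hudet : ∀ x, LinearMap.det (fderiv ℝ (gradient u) x).toLinearMap
        = Real.exp (-(w x)))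
    (κ C : ℝ) (hκ : 0 < κ) (hgrowth : ∀ x, κ * ‖x‖ - C ≤ w x) :
    -(t / (1 - t)) • ((volume Δ).toReal⁻¹ • ∫ y in Δ, y) ∈ Δ := by
  obtain ⟨ht0, ht1⟩ := ht
  have h1t : (0:ℝ) < 1 - t := by linarith
  have hwc : w = fun x => (1 - t) * u₀ x + t * u x := funext hwdef
  have hwsmooth : ContDiff ℝ (⊤:ℕ∞) w := by
    rw [hwc]; exact (contDiff_const.mul hu₀smooth).add (contDiff_const.mul husmooth)
  have hwdiff : Differentiable ℝ w := hwsmooth.differentiable (by simp)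
  have hu₀diff : Differentiable ℝ u₀ := hu₀smooth.differentiable (by simp)
  have hudiff : Differentiable ℝ u := husmooth.differentiable (by simp)
  have hG₀c : Continuous (gradient u₀) := (aux_grad_contDiff hu₀smooth).continuous
  have hGc : Continuous (gradient u) := (aux_grad_contDiff husmooth).continuous
  have hGd : Differentiable ℝ (gradient u) :=
    (aux_grad_contDiff husmooth).differentiable (by simp)
  set ρ : EuclideanSpace ℝ (Fin n) → ℝ := fun x => Real.exp (-(w x)) with hρdef
  have hρpos : ∀ x, 0 < ρ x := fun x => Real.exp_pos _
  have hρcont : Continuous ρ := Real.continuous_exp.comp hwsmooth.continuous.neg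
  have hρint : Integrable ρ := by
    refine (aux_integrable_exp κ C hκ).mono' hρcont.aestronglyMeasurable ?_
    refine Filter.Eventually.of_forall fun x => ?_
    rw [Real.norm_eq_abs, abs_of_pos (hρpos x)]
    exact Real.exp_le_exp.2 (by linarith [hgrowth x])
  have hG₀mem : ∀ x, gradient u₀ x ∈ Δ := fun x =>
    interior_subset (hu₀grad ▸ Set.mem_range_self x)
  have hGmem : ∀ x, gradient u x ∈ Δ := fun x =>
    interior_subset (hugrad ▸ Set.mem_range_self x)
  obtain ⟨R, hR⟩ := hΔcpt.isBounded.exists_norm_le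
  have hGbdd : ∀ x, ‖gradient u x‖ ≤ R := fun x => hR _ (hGmem x)
  -- integrability of ρ • F for bounded continuous F
  have hint : ∀ (F : EuclideanSpace ℝ (Fin n) → EuclideanSpace ℝ (Fin n)) (B : ℝ),
      Continuous F → (∀ x, ‖F x‖ ≤ B) → Integrable (fun x => ρ x • F x) := by
    intro F B hFc hFB
    refine (hρint.const_mul B).mono' (hρcont.smul hFc).aestronglyMeasurable ?_
    refine Filter.Eventually.of_forall fun x => ?_
    rw [norm_smul, Real.norm_eq_abs, abs_of_pos (hρpos x)]
    calc ρ x * ‖F x‖ ≤ ρ x * B := mul_le_mul_of_nonneg_left (hFB x) (hρpos x).le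
      _ = B * ρ x := mul_comm _ _
  have hI₀ : Integrable (fun x => ρ x • gradient u₀ x) := hint _ L hG₀c hu₀bdd
  have hIG : Integrable (fun x => ρ x • gradient u x) := hint _ R hGc hGbdd
  -- derivative facts
  have hwder : ∀ x, HasFDerivAt w ((1-t) • fderiv ℝ u₀ x + t • fderiv ℝ u x) x := by
    intro x
    rw [hwc]
    exact ((hu₀diff x).hasFDerivAt.const_mul (1-t)).add ((hudiff x).hasFDerivAt.const_mul t)
  have hwv : ∀ x v, fderiv ℝ w x v
      = (1-t) * ⟪gradient u₀ x, v⟫ + t * ⟪gradient u x, v⟫ := by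
    intro x v
    rw [(hwder x).fderiv]
    simp only [ContinuousLinearMap.add_apply, ContinuousLinearMap.coe_smul', Pi.smul_apply,
      smul_eq_mul, aux_inner_gradient]
  have hρder : ∀ x, HasFDerivAt ρ (Real.exp (-(w x)) • (-(fderiv ℝ w x))) x :=
    fun x => HasFDerivAt.exp ((hwdiff x).hasFDerivAt.neg)
  have hρdiff : Differentiable ℝ ρ := fun x => (hρder x).differentiableAt
  have heqd : ∀ v : EuclideanSpace ℝ (Fin n),
      (fun x => fderiv ℝ ρ x v) = fun x => -(ρ x * fderiv ℝ w x v) := by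
    intro v
    funext x
    rw [(hρder x).fderiv]
    simp only [ContinuousLinearMap.coe_smul', Pi.smul_apply, ContinuousLinearMap.neg_apply,
      smul_eq_mul, mul_neg]
    rfl
  -- scalar integrabilities
  have hsc₀ : ∀ v, Integrable (fun x => ρ x * ⟪gradient u₀ x, v⟫) := by
    intro v
    exact (hI₀.inner_const (𝕜 := ℝ) v).congr
      (Filter.Eventually.of_forall fun x => real_inner_smul_left _ _ _)
  have hscG : ∀ v, Integrable (fun x => ρ x * ⟪gradient u x, v⟫) := by
    intro v
    exact (hIG.inner_const (𝕜 := ℝ) v).congr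
      (Filter.Eventually.of_forall fun x => real_inner_smul_left _ _ _)
  have hscw : ∀ v, Integrable (fun x => ρ x * fderiv ℝ w x v) := by
    intro v
    have h := ((hsc₀ v).const_mul (1-t)).add ((hscG v).const_mul t)
    refine h.congr ?_
    refine Filter.Eventually.of_forall fun x => ?_
    simp only [Pi.add_apply]
    rw [hwv]
    ring
  -- integration by parts : ∫ ρ * ∂_v w = 0
  have key : ∀ v, (∫ x, ρ x * fderiv ℝ w x v) = 0 := by
    intro v
    have h1 : Integrable (fun x => fderiv ℝ ρ x v * (fun _ => (1:ℝ)) x) := by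
      simp only [mul_one]
      rw [heqd v]
      exact (hscw v).neg
    have h2 : Integrable (fun x => ρ x * fderiv ℝ (fun _ => (1:ℝ)) x v) := by
      simpa [fderiv_const] using (integrable_zero _ ℝ (volume : Measure (EuclideanSpace ℝ (Fin n))))
    have h3 : Integrable (fun x => ρ x * (fun _ => (1:ℝ)) x) := by simpa using hρint
    have hibp := integral_mul_fderiv_eq_neg_fderiv_mul_of_integrable h1 h2 h3 (fun x _ => hρdiff x)
      (fun x _ => differentiableAt_const (1:ℝ))
    simp only [fderiv_fun_const, Pi.zero_apply, ContinuousLinearMap.zero_apply, mul_zero, mul_one,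
      integral_zero] at hibp
    have h0 : (∫ x, fderiv ℝ ρ x v) = 0 := by linarith
    rw [heqd v, integral_neg, neg_eq_zero] at h0
    exact h0
  -- vector identity
  have hTS : (1 - t) • (∫ x, ρ x • gradient u₀ x) + t • (∫ x, ρ x • gradient u x) = 0 := by
    apply ext_inner_right (𝕜 := ℝ)
    intro v
    rw [inner_zero_left, inner_add_left, real_inner_smul_left, real_inner_smul_left,
      real_inner_comm v (∫ x, ρ x • gradient u₀ x), ← integral_inner hI₀ v,
      real_inner_comm v (∫ x, ρ x • gradient u x), ← integral_inner hIG v]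
    have e₀ : ∀ x, ⟪v, ρ x • gradient u₀ x⟫ = ρ x * ⟪gradient u₀ x, v⟫ := fun x => by
      rw [real_inner_smul_right, real_inner_comm]
    have eG : ∀ x, ⟪v, ρ x • gradient u x⟫ = ρ x * ⟪gradient u x, v⟫ := fun x => by
      rw [real_inner_smul_right, real_inner_comm]
    simp_rw [e₀, eG]
    rw [← integral_const_mul, ← integral_const_mul,
      ← integral_add ((hsc₀ v).const_mul (1-t)) ((hscG v).const_mul t), ← key v]
    apply integral_congr_ae
    refine Filter.Eventually.of_forall fun x => ?_
    simp only [hwv]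
    ring
  -- change of variables
  have hinj : Function.Injective (gradient u) := aux_grad_inj husmooth hupos
  have hGd' : ∀ x ∈ (univ : Set (EuclideanSpace ℝ (Fin n))),
      HasFDerivWithinAt (gradient u) (fderiv ℝ (gradient u) x) univ x :=
    fun x _ => (hGd x).hasFDerivAt.hasFDerivWithinAt
  have hdet : ∀ x, |(fderiv ℝ (gradient u) x).det| = ρ x := fun x => by
    show |LinearMap.det (fderiv ℝ (gradient u) x).toLinearMap| = ρ x
    rw [hudet x]
    exact abs_of_pos (Real.exp_pos _)
  have hCoVid : (∫ y in interior Δ, y) = ∫ x, ρ x • gradient u x := by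
    rw [← hugrad, ← Set.image_univ,
      integral_image_eq_integral_abs_det_fderiv_smul volume MeasurableSet.univ hGd'
        hinj.injOn (fun y => y), setIntegral_univ]
    apply integral_congr_ae
    exact Filter.Eventually.of_forall fun x => by simp only [hdet]
  have hCoV1 : (∫ y in interior Δ, (1:ℝ)) = ∫ x, ρ x := by
    rw [← hugrad, ← Set.image_univ,
      integral_image_eq_integral_abs_det_fderiv_smul volume MeasurableSet.univ hGd'
        hinj.injOn (fun _ => (1:ℝ)), setIntegral_univ]
    apply integral_congr_ae
    exact Filter.Eventually.of_forall fun x => by simp only [hdet, smul_eq_mul, mul_one]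
  -- measure facts
  have hae : (interior Δ : Set (EuclideanSpace ℝ (Fin n))) =ᵐ[volume] Δ :=
    interior_ae_eq_of_null_frontier (hΔconv.addHaar_frontier volume)
  have hvol0 : volume Δ ≠ 0 := by
    refine ne_of_gt (lt_of_lt_of_le ?_ (measure_mono (interior_subset)))
    exact isOpen_interior.measure_pos volume ⟨0, hΔ0⟩
  have hvolpos : 0 < (volume Δ).toReal :=
    ENNReal.toReal_pos hvol0 hΔcpt.measure_lt_top.ne
  have hρeq : (∫ x, ρ x) = (volume Δ).toReal := by
    rw [← hCoV1, setIntegral_const, measureReal_def, measure_congr hae, smul_eq_mul, mul_one]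
  have hSeq : (∫ x, ρ x • gradient u x) = ∫ y in Δ, y := by
    rw [← hCoVid, setIntegral_congr_set hae]
  have hT : (∫ x, ρ x • gradient u₀ x) = (-(t/(1-t))) • ∫ y in Δ, y := by
    have h := hTS
    rw [hSeq] at h
    have h2 : (1 - t) • (∫ x, ρ x • gradient u₀ x) = (-t) • (∫ y in Δ, y) := by
      rw [neg_smul]
      exact eq_neg_of_add_eq_zero_left h
    have h3 : (∫ x, ρ x • gradient u₀ x)
        = (1-t)⁻¹ • ((-t) • (∫ y in Δ, y)) := by
      rw [← h2, smul_smul, inv_mul_cancel₀ h1t.ne', one_smul]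
    rw [h3, smul_smul]
    congr 1
    field_simp
  -- the weighted measure
  set ν : Measure (EuclideanSpace ℝ (Fin n)) :=
    volume.withDensity (fun x => ((ρ x).toNNReal : ℝ≥0∞)) with hν
  have hmeas : Measurable fun x => (ρ x).toNNReal := hρcont.measurable.real_toNNReal
  have hν_univ : ν univ = ENNReal.ofReal ((volume Δ).toReal) := by
    rw [hν, withDensity_apply _ MeasurableSet.univ, Measure.restrict_univ, ← hρeq]
    show (∫⁻ a, ENNReal.ofReal (ρ a)) = ENNReal.ofReal (∫ x, ρ x)
    exact (ofReal_integral_eq_lintegral_ofReal hρint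
      (Filter.Eventually.of_forall fun x => (hρpos x).le)).symm
  have hfin : IsFiniteMeasure ν := ⟨by rw [hν_univ]; exact ENNReal.ofReal_lt_top⟩
  have hne : NeZero ν := by
    constructor
    intro h
    have h0 : ν univ = 0 := by rw [h]; simp
    rw [hν_univ] at h0
    exact (ENNReal.ofReal_pos.mpr hvolpos).ne' h0
  haveI := hfin
  haveI := hne
  have hG₀intν : Integrable (gradient u₀) ν := by
    rw [hν, integrable_withDensity_iff_integrable_smul hmeas]
    refine hI₀.congr (Filter.Eventually.of_forall fun x => ?_)
    simp only [NNReal.smul_def, Real.coe_toNNReal _ (hρpos x).le]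
  have havg : (⨍ x, gradient u₀ x ∂ν) ∈ Δ :=
    hΔconv.average_mem hΔcpt.isClosed (Filter.Eventually.of_forall fun x => hG₀mem x) hG₀intν
  have hintν : (∫ x, gradient u₀ x ∂ν) = ∫ x, ρ x • gradient u₀ x := by
    rw [hν, integral_withDensity_eq_integral_smul hmeas]
    refine integral_congr_ae (Filter.Eventually.of_forall fun x => ?_)
    simp only [NNReal.smul_def, Real.coe_toNNReal _ (hρpos x).le]
  have hfinal : (⨍ x, gradient u₀ x ∂ν)
      = -(t / (1 - t)) • ((volume Δ).toReal⁻¹ • ∫ y in Δ, y) := by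
    rw [average_eq, measureReal_def, hν_univ, ENNReal.toReal_ofReal ENNReal.toReal_nonneg, hintν, hT,
      smul_comm]
  rw [← hfinal]
  exact havg
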